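/- Every tournament on n vertices has monitoring arc-geodetic number at least n − 1. -/

import Mathlib

namespace MAG

variable {V : Type*}

/-- Directed walk from `x` to `y` whose list of visited vertices is `l`. -/
inductive DWalk (A : V → V → Prop) : V → V → List V → Prop
  | nil (v : V) : DWalk A v v [v]
  | cons {u v w : V} {l : List V} (h : A u v) (p : DWalk A v w l) :
      DWalk A u w (u :: l)

/-- The arc `(a, b)` lies on the walk with vertex list `l`. -/
def ArcOn (a b : V) (l : List V) : Prop :=
  ∃ l₁ l₂ : List V, l = l₁ ++ a :: b :: l₂

/-- `l` is (the vertex list of) a shortest directed walk from `x` to `y`. -/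
def IsShortest (A : V → V → Prop) (x y : V) (l : List V) : Prop :=
  DWalk A x y l ∧ ∀ l' : List V, DWalk A x y l' → l.length ≤ l'.length

/-- `x` and `y` monitor the arc `(a, b)`: the arc lies on every shortest
directed path from `x` to `y` (and such a path exists), or symmetrically
from `y` to `x`. -/
def Monitors (A : V → V → Prop) (x y a b : V) : Prop :=
  ((∃ l, IsShortest A x y l) ∧ ∀ l, IsShortest A x y l → ArcOn a b l) ∨
  ((∃ l, IsShortest A y x l) ∧ ∀ l, IsShortest A y x l → ArcOn a b l)

/-- A monitoring arc-geodetic set of the digraph `A`. -/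
def IsMAGSet (A : V → V → Prop) (M : Set V) : Prop :=
  ∀ a b : V, A a b → ∃ x ∈ M, ∃ y ∈ M, x ≠ y ∧ Monitors A x y a b

/-- The monitoring arc-geodetic number of the digraph `A`. -/
noncomputable def mag (A : V → V → Prop) [Fintype V] : ℕ :=
  sInf {n | ∃ M : Finset V, IsMAGSet A (M : Set V) ∧ M.card = n}

/-- `A` is an orientation of the undirected simple graph `G`. -/
structure IsOrientation (G : SimpleGraph V) (A : V → V → Prop) : Prop where
  adj_iff : ∀ u v : V, G.Adj u v ↔ (A u v ∨ A v u)
  asymm : ∀ u v : V, A u v → ¬ A v u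

/-- The lower monitoring arc-geodetic number of `G`. -/
noncomputable def magMinus (G : SimpleGraph V) [Fintype V] : ℕ :=
  sInf {n | ∃ A : V → V → Prop, IsOrientation G A ∧ mag A = n}

/-- The upper monitoring arc-geodetic number of `G`. -/
noncomputable def magPlus (G : SimpleGraph V) [Fintype V] : ℕ :=
  sSup {n | ∃ A : V → V → Prop, IsOrientation G A ∧ mag A = n}

/-- A source: a vertex with no in-neighbours. -/
def IsSource (A : V → V → Prop) (v : V) : Prop := ∀ w, ¬ A w v

/-- A sink: a vertex with no out-neighbours. -/
def IsSink (A : V → V → Prop) (v : V) : Prop := ∀ w, ¬ A v w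

/-- An oriented graph: no loops and no pair of opposite arcs. -/
def IsOrientedGraph (A : V → V → Prop) : Prop :=
  (∀ v, ¬ A v v) ∧ ∀ u v : V, A u v → ¬ A v u

/-- The underlying undirected graph of `A` is connected. -/
def IsConnectedDigraph (A : V → V → Prop) : Prop :=
  ∀ x y : V, Relation.ReflTransGen (fun a b => A a b ∨ A b a) x y


section Lemmas
variable {A : V → V → Prop} {x y z : V} {l : List V}

lemma dwalk_head (h : DWalk A x y l) : ∃ t, l = x :: t := by
  cases h with
  | nil => exact ⟨[], rfl⟩
  | cons h p => exact ⟨_, rfl⟩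

lemma dwalk_last (h : DWalk A x y l) : ∃ t, l = t ++ [y] := by
  induction h with
  | nil v => exact ⟨[], rfl⟩
  | cons h p ih =>
    obtain ⟨t, ht⟩ := ih
    exact ⟨_ :: t, by rw [ht]; rfl⟩

lemma dwalk_suffix (h : DWalk A x y l) :
    ∀ s (z : V) t, l = s ++ z :: t → DWalk A z y (z :: t) := by
  induction h with
  | nil v =>
    intro s z t he
    cases s with
    | nil =>
      simp only [List.nil_append, List.cons.injEq] at he
      obtain ⟨rfl, rfl⟩ := he
      exact DWalk.nil v
    | cons a s' =>
      simp only [List.cons_append, List.cons.injEq] at he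
      exact absurd he.2 (by simp)
  | cons hA p ih =>
    intro s z t he
    cases s with
    | nil =>
      simp only [List.nil_append] at he
      cases he
      exact DWalk.cons hA p
    | cons a s' =>
      simp only [List.cons_append, List.cons.injEq] at he
      exact ih s' z t he.2


lemma dwalk_prefix (h : DWalk A x y l) :
    ∀ s (z : V) t, l = s ++ z :: t → DWalk A x z (s ++ [z]) := by
  induction h with
  | nil v =>
    intro s z t he
    cases s with
    | nil =>
      simp only [List.nil_append, List.cons.injEq] at he
      obtain ⟨rfl, rfl⟩ := he
      exact DWalk.nil v
    | cons a s' =>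
      simp only [List.cons_append, List.cons.injEq] at he
      exact absurd he.2 (by simp)
  | cons hA p ih =>
    intro s z t he
    cases s with
    | nil =>
      simp only [List.nil_append, List.cons.injEq] at he
      obtain ⟨rfl, rfl⟩ := he
      exact DWalk.nil _
    | cons a s' =>
      simp only [List.cons_append, List.cons.injEq] at he
      obtain ⟨rfl, he2⟩ := he
      exact DWalk.cons hA (ih s' z t he2)

lemma dwalk_append {m : List V} (h : DWalk A x y l) (h' : DWalk A y z (y :: m)) :
    DWalk A x z (l ++ m) := by
  induction h with
  | nil v => exact h'
  | cons hA p ih => exact DWalk.cons hA (ih h')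

lemma dwalk_shorten (h : DWalk A x y l) :
    ¬ l.Nodup → ∃ l', DWalk A x y l' ∧ l'.length < l.length := by
  induction h with
  | nil v => intro hnd; exact absurd (by simp) hnd
  | @cons a b c L hA p ih =>
    by_cases hu : a ∈ L
    · intro _
      obtain ⟨s, t, hst⟩ := List.append_of_mem hu
      refine ⟨a :: t, dwalk_suffix p s a t hst, ?_⟩
      subst hst; simp
    · intro hnd
      have hnd' : ¬ L.Nodup := fun hN => hnd (by simp [List.nodup_cons, hu, hN])
      obtain ⟨l'', hw, hlen⟩ := ih hnd'
      exact ⟨a :: l'', DWalk.cons hA hw, by simpa using hlen⟩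

lemma shortest_nodup (h : IsShortest A x y l) : l.Nodup := by
  by_contra hnd
  obtain ⟨l', hw, hlen⟩ := dwalk_shorten h.1 hnd
  have := h.2 l' hw
  omega

lemma exists_shortest (h : DWalk A x y l) : ∃ l', IsShortest A x y l' := by
  classical
  have hne : {n | ∃ l', DWalk A x y l' ∧ l'.length = n}.Nonempty := ⟨l.length, l, h, rfl⟩
  obtain ⟨l', hw, hlen⟩ := Nat.sInf_mem hne
  exact ⟨l', hw, fun m hm => hlen ▸ Nat.sInf_le ⟨m, hm, rfl⟩⟩

lemma suffix_shortest {s t : List V} (h : IsShortest A x y (s ++ z :: t)) :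
    IsShortest A z y (z :: t) := by
  refine ⟨dwalk_suffix h.1 s z t rfl, ?_⟩
  intro l' hw
  obtain ⟨t', rfl⟩ := dwalk_head hw
  have hpre := dwalk_prefix h.1 s z t rfl
  have hcat := dwalk_append hpre hw
  have h2 := h.2 _ hcat
  simp only [List.length_append, List.length_cons, List.length_nil] at h2 ⊢
  omega

lemma append_inj_of_notmem {s s' t t' : List V} {z : V}
    (he : s ++ z :: t = s' ++ z :: t') (h1 : z ∉ s) (h2 : z ∉ s') :
    s = s' ∧ t = t' := by
  induction s generalizing s' with
  | nil =>
    cases s' with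
    | nil => simpa using he
    | cons a s'' =>
      simp only [List.nil_append, List.cons_append, List.cons.injEq] at he
      exact absurd (he.1 ▸ (List.mem_cons_self (a := a) (l := s''))) h2
  | cons a s ih =>
    cases s' with
    | nil =>
      simp only [List.nil_append, List.cons_append, List.cons.injEq] at he
      exact absurd (he.1.symm ▸ (List.mem_cons_self (a := a) (l := s))) h1
    | cons b s'' =>
      simp only [List.cons_append, List.cons.injEq] at he
      obtain ⟨rfl, he2⟩ := he
      obtain ⟨hs, ht⟩ := ih he2 (fun hm => h1 (List.mem_cons_of_mem _ hm))
        (fun hm => h2 (List.mem_cons_of_mem _ hm))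
      exact ⟨by rw [hs], ht⟩


lemma dwalk_single {w : V} (h : DWalk A x y [w]) : x = y := by
  cases h with
  | nil => rfl
  | cons h p => cases p

lemma dwalk_cons_arc {z : V} {t : List V} (h : DWalk A x y (x :: z :: t)) : A x z := by
  cases h with
  | cons hA p =>
    obtain ⟨t', ht⟩ := dwalk_head p
    injection ht with h1 h2
    exact h1 ▸ hA

def MonP (A : V → V → Prop) (x y a b : V) : Prop :=
  (∃ l, IsShortest A x y l) ∧ ∀ l, IsShortest A x y l → ArcOn a b l

section MonLemmas
variable {a b u v w : V}

lemma mon_beats_source (htot : ∀ u v : V, u ≠ v → A u v ∨ A v u) (hm : MonP A x y a b) (hxa : x ≠ a) : A b x := by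
  obtain ⟨⟨l, hl⟩, hall⟩ := hm
  obtain ⟨l₁, l₂, he⟩ := hall l hl
  have hsuf : DWalk A b y (b :: l₂) := dwalk_suffix hl.1 (l₁ ++ [a]) b l₂ (by simp [he])
  have hl₁ : l₁ ≠ [] := by
    rintro rfl
    obtain ⟨t, ht⟩ := dwalk_head hl.1
    rw [he] at ht
    simp only [List.nil_append, List.cons.injEq] at ht
    exact hxa ht.1.symm
  have hlen0 : 0 < l₁.length := List.length_pos_iff.mpr hl₁
  have hbx : b ≠ x := by
    rintro rfl
    have := hl.2 _ hsuf
    rw [he] at this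
    simp only [List.length_append, List.length_cons] at this
    omega
  by_contra hnb
  have hxb : A x b := (htot b x hbx).resolve_left hnb
  have hw : DWalk A x y (x :: b :: l₂) := DWalk.cons hxb hsuf
  have := hl.2 _ hw
  rw [he] at this
  simp only [List.length_append, List.length_cons] at this
  omega

lemma mon_sink_beats (htot : ∀ u v : V, u ≠ v → A u v ∨ A v u) (hm : MonP A x y a b) (hyb : y ≠ b) : A y a := by
  obtain ⟨⟨l, hl⟩, hall⟩ := hm
  obtain ⟨l₁, l₂, he⟩ := hall l hl
  have hpre : DWalk A x a (l₁ ++ [a]) := dwalk_prefix hl.1 l₁ a (b :: l₂) he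
  have hsuf : DWalk A b y (b :: l₂) := dwalk_suffix hl.1 (l₁ ++ [a]) b l₂ (by simp [he])
  have hl₂ : l₂ ≠ [] := by
    rintro rfl
    exact hyb (dwalk_single hsuf).symm
  have hlen0 : 0 < l₂.length := List.length_pos_iff.mpr hl₂
  have hay : a ≠ y := by
    rintro rfl
    have := hl.2 _ hpre
    rw [he] at this
    simp only [List.length_append, List.length_cons, List.length_nil] at this
    omega
  by_contra hnb
  have hay' : A a y := (htot a y hay).resolve_right hnb
  have hw : DWalk A x y ((l₁ ++ [a]) ++ [y]) :=
    dwalk_append hpre (DWalk.cons hay' (DWalk.nil y))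
  have := hl.2 _ hw
  rw [he] at this
  simp only [List.length_append, List.length_cons, List.length_nil] at this
  omega

lemma mon_long (hm : MonP A x y u v) (hxu : x ≠ u) (hyv : y ≠ v) :
    ∀ l, DWalk A x y l → 4 ≤ l.length := by
  obtain ⟨⟨l₀, hl₀⟩, hall⟩ := hm
  obtain ⟨l₁, l₂, he⟩ := hall _ hl₀
  have hl₁ : l₁ ≠ [] := by
    rintro rfl
    obtain ⟨t, ht⟩ := dwalk_head hl₀.1
    rw [he] at ht
    simp only [List.nil_append, List.cons.injEq] at ht
    exact hxu ht.1.symm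
  have hl₂ : l₂ ≠ [] := by
    rintro rfl
    have hsuf : DWalk A v y [v] := dwalk_suffix hl₀.1 (l₁ ++ [u]) v [] (by simp [he])
    exact hyv (dwalk_single hsuf).symm
  have h1 : 0 < l₁.length := List.length_pos_iff.mpr hl₁
  have h2 : 0 < l₂.length := List.length_pos_iff.mpr hl₂
  intro l hw
  have := hl₀.2 _ hw
  rw [he] at this
  simp only [List.length_append, List.length_cons] at this
  omega

lemma mon_reduce {c e : V} (hm : MonP A c e v w) (hcv : c ≠ v) :
    c ≠ w ∧ (∃ L, IsShortest A c w L) ∧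
      ∀ L, IsShortest A c w L → ∃ L₀, L = L₀ ++ [v, w] := by
  obtain ⟨⟨l, hl⟩, hall⟩ := hm
  obtain ⟨l₁, l₂, he⟩ := hall _ hl
  have hsufw : DWalk A w e (w :: l₂) := dwalk_suffix hl.1 (l₁ ++ [v]) w l₂ (by simp [he])
  have hl₁ : l₁ ≠ [] := by
    rintro rfl
    obtain ⟨t, ht⟩ := dwalk_head hl.1
    rw [he] at ht
    simp only [List.nil_append, List.cons.injEq] at ht
    exact hcv ht.1.symm
  have hlen1 : 0 < l₁.length := List.length_pos_iff.mpr hl₁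
  have hcw : c ≠ w := by
    rintro rfl
    have := hl.2 _ hsufw
    rw [he] at this
    simp only [List.length_append, List.length_cons] at this
    omega
  have hpre : DWalk A c w ((l₁ ++ [v]) ++ [w]) :=
    dwalk_prefix hl.1 (l₁ ++ [v]) w l₂ (by simp [he])
  obtain ⟨Ls, hLs⟩ := exists_shortest hpre
  refine ⟨hcw, ⟨Ls, hLs⟩, ?_⟩
  intro L hL
  obtain ⟨Lt, hLt⟩ := dwalk_last hL.1
  have hKwalk : DWalk A c e (L ++ l₂) := dwalk_append hL.1 hsufw
  have hLlen : L.length ≤ l₁.length + 2 := by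
    have := hL.2 _ hpre
    simpa using this
  have hKshort : IsShortest A c e (L ++ l₂) := by
    refine ⟨hKwalk, fun m hm' => ?_⟩
    have := hl.2 m hm'
    rw [he] at this
    simp only [List.length_append, List.length_cons] at this ⊢
    omega
  obtain ⟨β, δ, heK⟩ := hall _ hKshort
  have hnd : (L ++ l₂).Nodup := shortest_nodup hKshort
  have hw1 : w ∉ β ++ [v] := by
    intro hmem
    have hnd' := hnd
    rw [heK] at hnd'
    have h2 : (β ++ [v]).Disjoint (w :: δ) := by
      apply List.disjoint_of_nodup_append
      simpa using hnd'
    exact h2 hmem List.mem_cons_self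
  have hw2 : w ∉ Lt := by
    have hnd' := hnd
    rw [hLt] at hnd'
    intro hmem
    have h2 : Lt.Disjoint (w :: l₂) := by
      apply List.disjoint_of_nodup_append
      simpa using hnd'
    exact h2 hmem List.mem_cons_self
  have heq : (β ++ [v]) ++ w :: δ = Lt ++ w :: l₂ := by
    rw [List.append_assoc, List.singleton_append, ← heK, hLt, List.append_assoc,
      List.singleton_append]
  obtain ⟨h₁, h₂⟩ := append_inj_of_notmem heq hw1 hw2
  exact ⟨β, by rw [hLt, ← h₁]; simp⟩

lemma mon_step (hirr : ∀ v, ¬ A v v) (hasym : ∀ u v : V, A u v → ¬ A v u)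
    (htot : ∀ u v : V, u ≠ v → A u v ∨ A v u)
    (huv : A u v) {ywit c e : V}
    (hw : MonP A w ywit u v) (hwu : w ≠ u)
    (hc : MonP A c e v w) (hcu : c ≠ u) (hcv : c ≠ v) :
    MonP A c w u v ∧ A w c := by
  obtain ⟨hcw, ⟨L₀, hL₀⟩, hend⟩ := mon_reduce hc hcv
  have hwc : A w c := mon_beats_source htot hc hcv
  refine ⟨⟨⟨L₀, hL₀⟩, ?_⟩, hwc⟩
  intro L hL
  obtain ⟨β, hβ⟩ := hend L hL
  have hβne : β ≠ [] := by
    rintro rfl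
    obtain ⟨t, ht⟩ := dwalk_head hL.1
    rw [hβ] at ht
    simp only [List.nil_append, List.cons.injEq] at ht
    exact hcv ht.1.symm
  obtain ⟨β', q, hq⟩ := (List.eq_nil_or_concat β).resolve_left hβne
  have hLe : L = β' ++ q :: v :: w :: [] := by rw [hβ, hq]; simp
  have hqsuf : DWalk A q w (q :: v :: w :: []) := dwalk_suffix hL.1 β' q _ hLe
  have hqv : A q v := dwalk_cons_arc hqsuf
  by_cases hqu : q = u
  · subst hqu
    exact ⟨β', [w], hLe⟩
  · exfalso
    have hvw : A v w := dwalk_cons_arc (dwalk_suffix hqsuf [q] v [w] rfl)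
    have hqw : q ≠ w := fun h => hasym v w hvw (h ▸ hqv)
    have hwq : A w q := by
      by_contra hn
      have hqw' : A q w := (htot q w hqw).resolve_right hn
      have hpre : DWalk A c q (β' ++ [q]) := dwalk_prefix hL.1 β' q _ hLe
      have hwalk : DWalk A c w ((β' ++ [q]) ++ [w]) :=
        dwalk_append hpre (DWalk.cons hqw' (DWalk.nil w))
      have := hL.2 _ hwalk
      rw [hLe] at this
      simp only [List.length_append, List.length_cons, List.length_nil] at this
      omega
    obtain ⟨⟨m, hm⟩, hallm⟩ := hw
    obtain ⟨m₁, m₂, hem⟩ := hallm _ hm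
    have hm₁ : m₁ ≠ [] := by
      rintro rfl
      obtain ⟨t, ht⟩ := dwalk_head hm.1
      rw [hem] at ht
      simp only [List.nil_append, List.cons.injEq] at ht
      exact hwu ht.1.symm
    have hm₁len : 0 < m₁.length := List.length_pos_iff.mpr hm₁
    have hsufm : DWalk A v ywit (v :: m₂) :=
      dwalk_suffix hm.1 (m₁ ++ [u]) v m₂ (by simp [hem])
    have hN : DWalk A w ywit (w :: q :: v :: m₂) :=
      DWalk.cons hwq (DWalk.cons hqv hsufm)
    have hNshort : IsShortest A w ywit (w :: q :: v :: m₂) := by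
      refine ⟨hN, fun l' hl' => ?_⟩
      have h1 := hm.2 _ hl'
      rw [hem] at h1
      simp only [List.length_append, List.length_cons] at h1 ⊢
      omega
    obtain ⟨γ, δ, heN⟩ := hallm _ hNshort
    have huv' : u ≠ v := fun h => hirr v (h ▸ huv)
    match γ, heN with
    | [], heN =>
      simp only [List.nil_append, List.cons.injEq] at heN
      exact hwu heN.1
    | [g], heN =>
      simp only [List.cons_append, List.nil_append, List.cons.injEq] at heN
      exact hqu heN.2.1
    | g₁ :: g₂ :: γ', heN =>
      simp only [List.cons_append, List.cons.injEq] at heN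
      obtain ⟨h1, h2, heN2⟩ := heN
      subst h1; subst h2
      -- heN2 : v :: m₂ = γ' ++ u :: v :: δ
      have hvmshort : IsShortest A v ywit (v :: m₂) := by
        have hm' : IsShortest A w ywit ((m₁ ++ [u]) ++ v :: m₂) := by
          rw [List.append_assoc, List.singleton_append, ← hem]; exact hm
        exact suffix_shortest hm'
      cases γ' with
      | nil =>
        simp only [List.nil_append, List.cons.injEq] at heN2
        exact huv' heN2.1.symm
      | cons g₃ γ'' =>
        simp only [List.cons_append, List.cons.injEq] at heN2
        obtain ⟨h3, heN3⟩ := heN2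
        subst h3
        have hsufshort : DWalk A v ywit (v :: δ) := by
          refine dwalk_suffix hvmshort.1 (v :: γ'' ++ [u]) v δ ?_
          rw [heN3]; simp
        have hlt := hvmshort.2 _ hsufshort
        have hlen := congrArg List.length heN3
        simp only [List.length_cons, List.length_append] at hlt hlen
        omega

end MonLemmas

lemma dwalk_pair {z₁ z₂ : V} (h : DWalk A x y [z₁, z₂]) : x = z₁ ∧ z₂ = y := by
  obtain ⟨t, ht⟩ := dwalk_head h
  injection ht with h1 h2
  cases h with
  | cons hA p =>
    obtain ⟨t', ht'⟩ := dwalk_head p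
    injection ht' with h3 h4
    exact ⟨h1, h3 ▸ dwalk_single p⟩

lemma no_two_outside [Finite V] (hirr : ∀ v, ¬ A v v)
    (hasym : ∀ u v : V, A u v → ¬ A v u)
    (htot : ∀ u v : V, u ≠ v → A u v ∨ A v u)
    {S : Set V} (hM : IsMAGSet A S)
    {u v : V} (hu : u ∉ S) (hv : v ∉ S) (huv : A u v) : False := by
  classical
  have hmem : ∀ {z : V}, z ∈ S → z ≠ u ∧ z ≠ v :=
    fun hz => ⟨fun h => hu (h ▸ hz), fun h => hv (h ▸ hz)⟩
  have step : ∀ w : V, w ≠ u → w ≠ v → (∃ yw, MonP A w yw u v) →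
      ∃ c, (c ≠ u ∧ c ≠ v ∧ ∃ yc, MonP A c yc u v) ∧ MonP A c w u v ∧ A w c := by
    rintro w hwu hwv ⟨yw, hmon⟩
    have hvw : A v w := mon_beats_source htot hmon hwu
    obtain ⟨x, hx, y, hy, hxy, hm2⟩ := hM v w hvw
    rcases hm2 with h | h
    · obtain ⟨hstep, harc⟩ :=
        mon_step hirr hasym htot huv hmon hwu h (hmem hx).1 (hmem hx).2
      exact ⟨x, ⟨(hmem hx).1, (hmem hx).2, w, hstep⟩, hstep, harc⟩
    · obtain ⟨hstep, harc⟩ :=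
        mon_step hirr hasym htot huv hmon hwu h (hmem hy).1 (hmem hy).2
      exact ⟨y, ⟨(hmem hy).1, (hmem hy).2, w, hstep⟩, hstep, harc⟩
  obtain ⟨x0, hx0, y0, hy0, hxy0, hm0⟩ := hM u v huv
  have base : ∃ w, w ≠ u ∧ w ≠ v ∧ ∃ yw, MonP A w yw u v := by
    rcases hm0 with h | h
    · exact ⟨x0, (hmem hx0).1, (hmem hx0).2, y0, h⟩
    · exact ⟨y0, (hmem hy0).1, (hmem hy0).2, x0, h⟩
  have key : ∀ g : {w : V // w ≠ u ∧ w ≠ v ∧ ∃ yw, MonP A w yw u v},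
      ∃ g' : {w : V // w ≠ u ∧ w ≠ v ∧ ∃ yw, MonP A w yw u v},
        MonP A g'.1 g.1 u v ∧ A g.1 g'.1 := by
    rintro ⟨w, hw1, hw2, hw3⟩
    obtain ⟨c, hc, h1, h2⟩ := step w hw1 hw2 hw3
    exact ⟨⟨c, hc⟩, h1, h2⟩
  choose F hF1 hF2 using key
  obtain ⟨w0, h0a, h0b, h0c⟩ := base
  set seq : ℕ → {w : V // w ≠ u ∧ w ≠ v ∧ ∃ yw, MonP A w yw u v} :=
    fun n => F^[n] ⟨w0, h0a, h0b, h0c⟩ with hseqdef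
  have hseq : ∀ n, seq (n+1) = F (seq n) := fun n => Function.iterate_succ_apply' F n _
  have hmon : ∀ n, MonP A (seq (n+1)).1 (seq n).1 u v := fun n => by
    rw [hseq]; exact hF1 _
  have harc : ∀ n, A (seq n).1 (seq (n+1)).1 := fun n => by
    have := hF2 (seq n); rw [← hseq] at this; exact this
  have hlong : ∀ n, ∀ l, DWalk A (seq (n+1)).1 (seq n).1 l → 4 ≤ l.length :=
    fun n => mon_long (hmon n) (seq (n+1)).2.1 (seq n).2.2.1
  have claim : ∀ j, 1 ≤ j → ∀ i, A (seq i).1 (seq (i+j)).1 := by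
    intro j
    induction j with
    | zero => omega
    | succ j ih =>
      intro _ i
      by_cases hj : j = 0
      · subst hj; exact harc i
      · have h1 : A (seq (i+1)).1 (seq (i+1+j)).1 := ih (by omega) (i+1)
        have heqi : i+1+j = i + (j+1) := by omega
        rw [heqi] at h1
        by_contra hno
        by_cases hEq : (seq (i+(j+1))).1 = (seq i).1
        · have hwk : DWalk A (seq (i+1)).1 (seq i).1 [(seq (i+1)).1, (seq i).1] :=
            DWalk.cons (hEq ▸ h1) (DWalk.nil _)
          have := hlong i _ hwk
          simp at this
        · have h2 : A (seq (i+(j+1))).1 (seq i).1 :=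
            (htot _ _ hEq).resolve_right hno
          have hwk : DWalk A (seq (i+1)).1 (seq i).1
              [(seq (i+1)).1, (seq (i+(j+1))).1, (seq i).1] :=
            DWalk.cons h1 (DWalk.cons h2 (DWalk.nil _))
          have := hlong i _ hwk
          simp at this
  obtain ⟨a, b, hab, heq2⟩ := Finite.exists_ne_map_eq_of_infinite (fun n => (seq n).1)
  rcases lt_or_gt_of_ne hab with hlt | hlt
  · have hA := claim (b - a) (by omega) a
    rw [show a + (b - a) = b by omega] at hA
    have heq3 : (seq a).1 = (seq b).1 := heq2
    rw [heq3] at hA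
    exact hirr _ hA
  · have hA := claim (a - b) (by omega) b
    rw [show b + (a - b) = a by omega] at hA
    have heq3 : (seq a).1 = (seq b).1 := heq2
    rw [← heq3] at hA
    exact hirr _ hA

lemma univ_isMAGSet [Fintype V] (hirr : ∀ v, ¬ A v v) :
    IsMAGSet A ((Finset.univ : Finset V) : Set V) := by
  intro a b hab
  have hne : a ≠ b := fun h => hirr a (h ▸ hab)
  refine ⟨a, by simp, b, by simp, hne, Or.inl ⟨⟨[a, b], ?_⟩, ?_⟩⟩
  · refine ⟨DWalk.cons hab (DWalk.nil b), ?_⟩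
    intro l hl
    obtain ⟨t, rfl⟩ := dwalk_head hl
    cases t with
    | nil => exact absurd (dwalk_single hl) hne
    | cons z t' => simp
  · intro l hl
    have hw2 : DWalk A a b [a, b] := DWalk.cons hab (DWalk.nil b)
    have hle := hl.2 _ hw2
    obtain ⟨t, rfl⟩ := dwalk_head hl.1
    cases t with
    | nil => exact absurd (dwalk_single hl.1) hne
    | cons z t' =>
      cases t' with
      | nil =>
        obtain ⟨h1, h2⟩ := dwalk_pair hl.1
        exact ⟨[], [], by rw [h2]; rfl⟩
      | cons z2 t'' => simp at hle

end Lemmas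
/-- every tournament on `n` vertices has monitoring arc-geodetic
number at least `n - 1`. -/
theorem tournament_mag_ge {V : Type*} [Fintype V] (A : V → V → Prop)
    (hirr : ∀ v, ¬ A v v) (hasym : ∀ u v : V, A u v → ¬ A v u)
    (htot : ∀ u v : V, u ≠ v → A u v ∨ A v u) :
    Fintype.card V - 1 ≤ mag A := by
  classical
  have hne : {n | ∃ M : Finset V, IsMAGSet A (M : Set V) ∧ M.card = n}.Nonempty :=
    ⟨Finset.univ.card, Finset.univ, univ_isMAGSet hirr, rfl⟩
  obtain ⟨M, hM, hcard⟩ := Nat.sInf_mem hne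
  rw [mag, ← hcard]
  by_contra hlt
  push_neg at hlt
  have hcompl : 1 < Mᶜ.card := by
    rw [Finset.card_compl]
    omega
  obtain ⟨u, hu, v, hv, huv⟩ := Finset.one_lt_card.mp hcompl
  have hu2 : u ∉ (M : Set V) := by simpa using Finset.mem_compl.mp hu
  have hv2 : v ∉ (M : Set V) := by simpa using Finset.mem_compl.mp hv
  rcases htot u v huv with h | h
  · exact no_two_outside hirr hasym htot hM hu2 hv2 h
  · exact no_two_outside hirr hasym htot hM hv2 hu2 h

end MAG
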